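/- Let F be algebraically closed and let φ be a nontrivial odd δ-superderivation of V = V_{1/2}(Z,D), i.e. δ ∉ {0,1} and φ does not belong to the supercentroid of V. Then δ = 1/2 and: (1) if the characteristic p of F is not 3, there exists a nonzero z ∈ Z such that φ(a,b) = (zb, 0) for all (a,b) ∈ V; (2) if p = 3, there exist α ∈ F and z ∈ Z, not both zero, such that φ(a,b) = (αD(D(b)) + zb, αD(a)) for all (a,b) ∈ V. -/

import Mathlib

/-- The product of the Jordan superalgebra `V_{1/2}(Z,D)` on `Z × Z`
(even part `Z × 0`, odd part `0 × Z`):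
`(a,b)·(c,d) = (ac + D(b)d − bD(d), (1/2)(ad + bc))`. -/
def vmul {F : Type*} [Field F] {Z : Type*} [CommRing Z] [Algebra F Z]
    (D : Z →ₗ[F] Z) (x y : Z × Z) : Z × Z :=
  (x.1 * y.1 + D x.2 * y.2 - x.2 * D y.2, (1 / 2 : F) • (x.1 * y.2 + x.2 * y.1))

/-- `φ` is an odd `δ`-superderivation of `V_{1/2}(Z,D)`: it interchanges the even and the
odd part, and for homogeneous `x, y` it satisfies
`φ(x·y) = δ(φ(x)·y + (−1)^{p(x)} x·φ(y))`. -/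
def IsOddSuperDer {F : Type*} [Field F] {Z : Type*} [CommRing Z] [Algebra F Z]
    (D : Z →ₗ[F] Z) (δ : F) (φ : Z × Z → Z × Z) : Prop :=
  (∀ a : Z, (φ (a, 0)).1 = 0) ∧ (∀ b : Z, (φ (0, b)).2 = 0) ∧
  (∀ x y : Z × Z, x.2 = 0 → (y.1 = 0 ∨ y.2 = 0) →
    φ (vmul D x y) = δ • (vmul D (φ x) y + vmul D x (φ y))) ∧
  (∀ x y : Z × Z, x.1 = 0 → (y.1 = 0 ∨ y.2 = 0) →
    φ (vmul D x y) = δ • (vmul D (φ x) y - vmul D x (φ y)))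

/-- `χ` lies in the centroid of `V_{1/2}(Z,D)`:
`χ(x·y) = χ(x)·y = x·χ(y)` for all `x, y`. -/
def InCentroid {F : Type*} [Field F] {Z : Type*} [CommRing Z] [Algebra F Z]
    (D : Z →ₗ[F] Z) (χ : Z × Z → Z × Z) : Prop :=
  ∀ x y : Z × Z, χ (vmul D x y) = vmul D (χ x) y ∧ χ (vmul D x y) = vmul D x (χ y)

/-- `χ` lies in the odd part of the supercentroid of `V_{1/2}(Z,D)`: it is odd and
`χ(x·y) = χ(x)·y = (−1)^{p(x)} x·χ(y)` for all homogeneous `x, y`. -/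
def InOddSupercentroid {F : Type*} [Field F] {Z : Type*} [CommRing Z] [Algebra F Z]
    (D : Z →ₗ[F] Z) (χ : Z × Z → Z × Z) : Prop :=
  (∀ a : Z, (χ (a, 0)).1 = 0) ∧ (∀ b : Z, (χ (0, b)).2 = 0) ∧
  (∀ x y : Z × Z, (x.1 = 0 ∨ x.2 = 0) → (y.1 = 0 ∨ y.2 = 0) →
    χ (vmul D x y) = vmul D (χ x) y) ∧
  (∀ x y : Z × Z, x.2 = 0 → (y.1 = 0 ∨ y.2 = 0) →
    χ (vmul D x y) = vmul D x (χ y)) ∧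
  (∀ x y : Z × Z, x.1 = 0 → (y.1 = 0 ∨ y.2 = 0) →
    χ (vmul D x y) = - vmul D x (χ y))

section aux
variable {F : Type*} [Field F] {Z : Type*} [CommRing Z] [Algebra F Z]

lemma aux_smul_cancel {c : F} (hc : c ≠ 0) {x : Z} (h : c • x = 0) : x = 0 := by
  have h2 := congrArg (fun y => c⁻¹ • y) h
  simpa [smul_smul, inv_mul_cancel₀ hc] using h2

lemma aux_vee (D : Z →ₗ[F] Z) (a c : Z) : vmul D (a, 0) (c, 0) = (a * c, 0) := by
  simp [vmul]

lemma aux_veo (D : Z →ₗ[F] Z) (a d : Z) :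
    vmul D (a, 0) ((0 : Z), d) = (0, (1 / 2 : F) • (a * d)) := by
  simp [vmul]

lemma aux_voe (D : Z →ₗ[F] Z) (b c : Z) :
    vmul D ((0 : Z), b) (c, 0) = (0, (1 / 2 : F) • (b * c)) := by
  simp [vmul]

lemma aux_voo (D : Z →ₗ[F] Z) (b d : Z) :
    vmul D ((0 : Z), b) ((0 : Z), d) = (D b * d - b * D d, 0) := by
  simp [vmul]

lemma aux_zero_oddsc (D : Z →ₗ[F] Z) :
    InOddSupercentroid D (fun _ : Z × Z => (0 : Z × Z)) := by
  refine ⟨fun _ => rfl, fun _ => rfl, ?_, ?_, ?_⟩ <;>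
    · intro x y _ _
      simp [vmul, Prod.ext_iff]

lemma aux_cast_ringChar (n : ℕ) (h : ringChar F = n) : ((n : ℕ) : F) = 0 := by
  rw [← h]
  exact ringChar.Nat.cast_ringChar

lemma aux_cast_ne (n : ℕ) (hp : n.Prime) (h : ringChar F ≠ n) : ((n : ℕ) : F) ≠ 0 := by
  intro h0
  have hd : ringChar F ∣ n := (CharP.cast_eq_zero_iff F (ringChar F) n).mp h0
  rcases hp.eq_one_or_self_of_dvd _ hd with h1 | h1
  · have h11 : ((1 : ℕ) : F) = 0 :=
      (CharP.cast_eq_zero_iff F (ringChar F) 1).mpr (by rw [h1])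
    simp at h11
  · exact h h1

end aux

/-- (F algebraically closed of characteristic p ≠ 2)  A nontrivial odd
`δ`-superderivation `φ` of `V_{1/2}(Z,D)` (i.e. `δ ∉ {0,1}` and `φ` is not in the
supercentroid) occurs only for `δ = 1/2`; then for `p ≠ 3` one has
`φ(a,b) = (zb, 0)` for some nonzero `z ∈ Z`, while for `p = 3` one has
`φ(a,b) = (αD(D(b)) + zb, αD(a))` for some `α ∈ F`, `z ∈ Z` not both zero. -/
theorem nontrivial_odd_delta_superderivation_of_V
    {F : Type*} [Field F] [IsAlgClosed F] (h2 : ringChar F ≠ 2)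
    {Z : Type*} [CommRing Z] [Algebra F Z]
(D : Z →ₗ[F] Z)
    (hD : ∀ a b : Z, D (a * b) = D a * b + a * D b)
    (hD0 : D ≠ 0)
    (hsimple : ∀ I : Ideal Z, (∀ x ∈ I, D x ∈ I) → I = ⊥ ∨ I = ⊤)
    (hker : ∀ a : Z, D a = 0 → ∃ c : F, a = algebraMap F Z c)
    (δ : F) (hδ0 : δ ≠ 0) (hδ1 : δ ≠ 1)
    (φ : Z × Z →ₗ[F] Z × Z)
    (hsd : IsOddSuperDer D δ ⇑φ)
    (hnt : ¬ InOddSupercentroid D ⇑φ) :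
    δ = 1 / 2 ∧
    (ringChar F ≠ 3 →
      ∃ z : Z, z ≠ 0 ∧ ∀ a b : Z, φ (a, b) = (z * b, 0)) ∧
    (ringChar F = 3 →
      ∃ (α : F) (z : Z), ¬ (α = 0 ∧ z = 0) ∧
        ∀ a b : Z, φ (a, b) = (α • D (D b) + z * b, α • D a)) := by
  classical
  obtain ⟨he, ho, hee, hoe⟩ := hsd
  let f : Z →ₗ[F] Z := LinearMap.snd F Z Z ∘ₗ φ ∘ₗ LinearMap.inl F Z Z
  let g : Z →ₗ[F] Z := LinearMap.fst F Z Z ∘ₗ φ ∘ₗ LinearMap.inr F Z Z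
  have hφe : ∀ x : Z, φ (x, 0) = ((0 : Z), f x) := fun x => Prod.ext (he x) rfl
  have hφo : ∀ x : Z, φ ((0 : Z), x) = (g x, (0 : Z)) := fun x => Prod.ext rfl (ho x)
  have hφab : ∀ a b : Z, φ (a, b) = (g b, f a) := by
    intro a b
    have h : ((a, b) : Z × Z) = ((a, 0) + ((0 : Z), b) : Z × Z) := by simp
    rw [h, map_add, hφe, hφo, Prod.mk_add_mk, zero_add, add_zero]
  have hcontra : (∀ a b : Z, φ (a, b) = 0) → False := by
    intro h0
    apply hnt
    have hc : ⇑φ = fun _ : Z × Z => (0 : Z × Z) := by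
      funext x
      have := h0 x.1 x.2
      simpa using this
    rw [hc]
    exact aux_zero_oddsc D
  -- the four structure equations
  have eqA : ∀ a c : Z,
      f (a * c) = δ • ((1 / 2 : F) • (f a * c) + (1 / 2 : F) • (a * f c)) := by
    intro a c
    have h := hee (a, 0) (c, 0) rfl (Or.inr rfl)
    rw [aux_vee, hφe a, hφe c, hφe (a * c), aux_voe, aux_veo] at h
    simpa using congrArg Prod.snd h
  have eqB : ∀ a d : Z,
      (1 / 2 : F) • g (a * d) = δ • (D (f a) * d - f a * D d + a * g d) := by
    intro a d
    have h := hee (a, 0) ((0 : Z), d) rfl (Or.inl rfl)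
    rw [aux_veo, hφo, hφo, hφe a, aux_voo, aux_vee] at h
    simpa using congrArg Prod.fst h
  have eqD : ∀ b d : Z,
      f (D b * d - b * D d) =
        δ • ((1 / 2 : F) • (g b * d) - (1 / 2 : F) • (b * g d)) := by
    intro b d
    have h := hoe ((0 : Z), b) ((0 : Z), d) rfl (Or.inl rfl)
    rw [aux_voo, hφo b, hφo d, hφe, aux_veo, aux_voe] at h
    simpa using congrArg Prod.snd h
  have h2F : (2 : F) ≠ 0 := by
    have := aux_cast_ne (F := F) 2 Nat.prime_two h2
    simpa using this
  have hhalf_ne : (1 / 2 : F) ≠ 0 := one_div_ne_zero h2F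
  have hD1 : D (1 : Z) = 0 := by
    have h := hD 1 1
    simp only [mul_one, one_mul] at h
    exact left_eq_add.mp h
  have hs1 : (1 / 2 : F) + 1 / 2 = 1 := by
    rw [← add_div, div_eq_one_iff_eq h2F]
    norm_num
  have hf1 : f 1 = 0 := by
    have h := eqA 1 1
    simp only [mul_one, one_mul] at h
    have h' : f 1 = δ • f 1 := by
      conv_lhs => rw [h]
      rw [← add_smul, hs1, one_smul]
    have h0 : (1 - δ) • f 1 = 0 := by rw [sub_smul, one_smul, ← h', sub_self]
    exact aux_smul_cancel (sub_ne_zero.mpr (Ne.symm hδ1)) h0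
  by_cases hδ2 : δ = 2
  · -- δ = 2 : f is a derivation of Z
    subst hδ2
    have hfd : ∀ a c : Z, f (a * c) = f a * c + a * f c := by
      intro a c
      have h := eqA a c
      have hs2 : (2 : F) * (1 / 2) = 1 := by
        rw [mul_one_div, div_self h2F]
      rw [smul_add, smul_smul, smul_smul, hs2, one_smul, one_smul] at h
      exact h
    by_cases h3 : ringChar F = 3
    · -- characteristic 3, δ = 2 = 1/2
      have h3F : (3 : F) = 0 := by simpa using aux_cast_ringChar (F := F) 3 h3
      have h3Z : (3 : Z) = 0 := by
        have h := map_natCast (algebraMap F Z) 3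
        rw [Nat.cast_ofNat, Nat.cast_ofNat, h3F, map_zero] at h
        exact h.symm
      have hsmul2 : ∀ x : Z, (2 : F) • x = -x := by
        intro x
        have h21 : (2 : F) = -1 := by linear_combination h3F
        rw [h21, neg_smul, one_smul]
      have hsmulhalf : ∀ x : Z, (1 / 2 : F) • x = -x := by
        intro x
        have h21 : (1 / 2 : F) = -1 := by
          rw [div_eq_iff h2F]
          linear_combination h3F
        rw [h21, neg_smul, one_smul]
      have eqB' : ∀ a d : Z, g (a * d) = D (f a) * d - f a * D d + a * g d := by
        intro a d
        have h := eqB a d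
        rw [hsmulhalf, hsmul2] at h
        exact neg_injective h
      have hg : ∀ a, g a = D (f a) + a * g 1 := by
        intro a
        have h := eqB' a 1
        simp only [mul_one, hD1, mul_zero, sub_zero] at h
        exact h
      have hkey : ∀ a d : Z, D a * f d = f a * D d := by
        intro a d
        have h := eqB' a d
        rw [hg (a * d), hg d, hfd a d, map_add, hD (f a) d, hD a (f d)] at h
        linear_combination h - f a * D d * h3Z
      have hcomm : ∀ b, f (D b) = D (f b) := by
        intro b
        have h := eqD b 1
        simp only [mul_one, hD1, mul_zero, sub_zero, hsmulhalf, hsmul2] at h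
        linear_combination h + hg b
      obtain ⟨b0, hb0⟩ : ∃ b, D b ≠ 0 := by
        by_contra hcon
        push_neg at hcon
        exact hD0 (LinearMap.ext fun b => hcon b)
      have hspan_top : Ideal.span (Set.range ⇑D) = ⊤ := by
        rcases hsimple (Ideal.span (Set.range ⇑D))
            (fun x _ => Ideal.subset_span ⟨x, rfl⟩) with hbot | htop
        · exfalso
          have hmem : D b0 ∈ Ideal.span (Set.range ⇑D) := Ideal.subset_span ⟨b0, rfl⟩
          rw [hbot] at hmem
          exact hb0 ((Submodule.mem_bot Z).mp hmem)
        · exact htop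
      have hrep : ∀ x ∈ Ideal.span (Set.range ⇑D), ∃ w : Z, ∀ b, f b * x = w * D b := by
        intro x hx
        induction hx using Submodule.span_induction with
        | mem y hy =>
          obtain ⟨a, rfl⟩ := hy
          exact ⟨f a, fun b => by rw [mul_comm]; exact hkey a b⟩
        | zero => exact ⟨0, fun b => by simp⟩
        | add p q _ _ hp hq =>
          obtain ⟨w1, h1⟩ := hp
          obtain ⟨w2, h2⟩ := hq
          exact ⟨w1 + w2, fun b => by rw [mul_add, h1 b, h2 b, add_mul]⟩
        | smul a p _ hp =>
          obtain ⟨w, h0⟩ := hp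
          exact ⟨a * w, fun b => by
            rw [smul_eq_mul, mul_left_comm, h0 b, ← mul_assoc]⟩
      obtain ⟨w, hw⟩ := hrep 1 (by rw [hspan_top]; trivial)
      have hfb : ∀ b, f b = w * D b := fun b => by
        have h := hw b
        rwa [mul_one] at h
      have hDw : ∀ b, D w * D b = 0 := by
        intro b
        have h := hcomm b
        rw [hfb (D b), hfb b, hD w (D b)] at h
        linear_combination -h
      have hJ : D w = 0 := by
        set J : Ideal Z :=
          { carrier := {c | ∀ b, c * D b = 0}
            add_mem' := fun hx hy b => by
              rw [add_mul, hx b, hy b, add_zero]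
            zero_mem' := fun b => zero_mul _
            smul_mem' := fun a c hc b => by
              rw [smul_eq_mul, mul_assoc, hc b, mul_zero] } with hJdef
        have hJinv : ∀ x ∈ J, D x ∈ J := by
          intro x hx b
          have h1 : D (x * D b) = D x * D b + x * D (D b) := hD x (D b)
          rw [hx b, map_zero] at h1
          have h2 := hx (D b)
          linear_combination -h1 - h2
        rcases hsimple J hJinv with hbot | htop
        · have hmem : D w ∈ J := hDw
          rw [hbot] at hmem
          exact (Submodule.mem_bot Z).mp hmem
        · exfalso
          have h1J : (1 : Z) ∈ J := htop ▸ Submodule.mem_top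
          have hpred : ∀ b, (1 : Z) * D b = 0 := h1J
          have := hpred b0
          rw [one_mul] at this
          exact hb0 this
      obtain ⟨α, hα⟩ := hker w hJ
      have hfb' : ∀ b, f b = α • D b := by
        intro b
        rw [hfb b, hα, ← Algebra.smul_def]
      have hgb : ∀ b, g b = α • D (D b) + g 1 * b := by
        intro b
        rw [hg b, hfb' b, map_smul, mul_comm]
      have hδ12 : (2 : F) = 1 / 2 := by
        rw [eq_div_iff h2F]
        linear_combination h3F
      refine ⟨hδ12, ?_, ?_⟩
      · intro hne3
        exact absurd h3 hne3
      · intro _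
        refine ⟨α, g 1, ?_, ?_⟩
        · rintro ⟨hα0, hz0⟩
          apply hcontra
          intro a b
          rw [hφab a b, hgb b, hfb' a, hα0, hz0, zero_smul, zero_smul, zero_mul,
            add_zero]
          rfl
        · intro a b
          rw [hφab a b, hgb b, hfb' a]
    · -- characteristic ≠ 3, δ = 2 : contradiction
      exfalso
      have h3F : (3 : F) ≠ 0 := by
        have := aux_cast_ne (F := F) 3 (by norm_num) h3
        simpa using this
      have hg0 : ∀ d, g d = 0 := by
        intro d
        have h := eqB 1 d
        simp only [one_mul, hf1, map_zero, zero_mul, sub_zero, zero_add] at h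
        have h0 : ((1 / 2 : F) - 2) • g d = 0 := by rw [sub_smul, h, sub_self]
        have hne : (1 / 2 : F) - 2 ≠ 0 := by
          intro hh
          apply h3F
          have h1 : (1 : F) = 2 * 2 := by
            rw [← div_eq_iff h2F]
            linear_combination hh
          linear_combination -h1
        exact aux_smul_cancel hne h0
      have hDf : ∀ a, D (f a) = 0 := by
        intro a
        have h := eqB a 1
        simp only [mul_one, hD1, mul_zero, sub_zero, hg0, smul_zero, add_zero] at h
        exact (aux_smul_cancel h2F h.symm)
      have hf0 : ∀ a, f a = 0 := by
        intro a
        obtain ⟨c, hc⟩ := hker (f a) (hDf a)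
        by_cases hc0 : c = 0
        · rw [hc, hc0, map_zero]
        · exfalso
          apply hD0
          apply LinearMap.ext
          intro d
          have h := eqB a d
          simp only [hg0, smul_zero, mul_zero, add_zero, hDf, zero_mul, zero_sub] at h
          have h1 : f a * D d = 0 := neg_eq_zero.mp (aux_smul_cancel h2F h.symm)
          rw [hc, ← Algebra.smul_def] at h1
          rw [LinearMap.zero_apply]
          exact aux_smul_cancel hc0 h1
      exact hcontra fun a b => by rw [hφab a b, hf0 a, hg0 b]; rfl
  · -- δ ≠ 2
    have hf : ∀ a, f a = 0 := by
      intro a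
      have h := eqA a 1
      simp only [mul_one, hf1, mul_zero, smul_zero, add_zero, smul_smul] at h
      have hne : (1 : F) - δ * (1 / 2) ≠ 0 := by
        intro h0
        apply hδ2
        have h1 : δ * (1 / 2) = 1 := by linear_combination -h0
        rw [mul_one_div] at h1
        exact (div_eq_one_iff_eq h2F).mp h1
      have h0 : ((1 : F) - δ * (1 / 2)) • f a = 0 := by
        rw [sub_smul, one_smul, ← h, sub_self]
      exact aux_smul_cancel hne h0
    have hδhalf : δ = 1 / 2 := by
      by_contra hδh
      apply hcontra
      intro a b
      have hg0 : ∀ d, g d = 0 := by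
        intro d
        have h := eqB 1 d
        simp only [one_mul, hf1, map_zero, zero_mul, sub_zero, zero_add] at h
        have h0 : ((1 / 2 : F) - δ) • g d = 0 := by rw [sub_smul, h, sub_self]
        exact aux_smul_cancel (sub_ne_zero.mpr (Ne.symm hδh)) h0
      rw [hφab a b, hf a, hg0 b]
      rfl
    have h3F : (3 : F) ≠ 0 := by
      intro h3
      apply hδ2
      rw [hδhalf, div_eq_iff h2F]
      linear_combination -h3
    have h3ring : ringChar F ≠ 3 := by
      intro h3
      exact h3F (by simpa using aux_cast_ringChar (F := F) 3 h3)
    have hgb : ∀ b, g b = b * g 1 := by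
      intro b
      have h := eqD b 1
      rw [hf (D b * 1 - b * D 1)] at h
      rw [mul_one] at h
      have h1 : (1 / 2 : F) • g b - (1 / 2 : F) • (b * g 1) = 0 :=
        aux_smul_cancel hδ0 h.symm
      rw [← smul_sub] at h1
      exact sub_eq_zero.mp (aux_smul_cancel hhalf_ne h1)
    refine ⟨hδhalf, ?_, ?_⟩
    · intro _
      refine ⟨g 1, ?_, ?_⟩
      · intro hz
        apply hcontra
        intro a b
        rw [hφab a b, hf a, hgb b, hz, mul_zero]
        rfl
      · intro a b
        rw [hφab a b, hf a, hgb b, mul_comm]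
    · intro h3
      exact absurd h3 h3ring
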